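/- For all n ≥ k ≥ 0, u_r(n,k) = Σ_{i=k}^{n} C(i,k) · (-r)^{i-k} · u(n,i), where u(n,i) = u_0(n,i). -/
import Mathlib


/-- `centralu r n k` is the r-central factorial number with even indices of the first kind. -/
def centralu (r : ℕ) : ℕ → ℕ → ℤ
  | 0, 0 => 1
  | 0, _ + 1 => 0
  | n + 1, 0 => (-1) ^ (n + 1) * ∏ i ∈ Finset.range (n + 1), ((i : ℤ) ^ 2 + r)
  | n + 1, k + 1 => centralu r n k - ((n : ℤ) ^ 2 + r) * centralu r n (k + 1)

lemma centralu_zero_of_lt (r : ℕ) : ∀ n k : ℕ, n < k → centralu r n k = 0 := by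
  intro n
  induction n with
  | zero => intro k hk; match k, hk with
    | k + 1, _ => rfl
  | succ n ih =>
    intro k hk
    match k, hk with
    | k + 1, hk =>
      have h1 : n < k := by omega
      have h2 : n < k + 1 := by omega
      show centralu r n k - ((n : ℤ) ^ 2 + r) * centralu r n (k + 1) = 0
      rw [ih k h1, ih (k+1) h2]; ring

lemma centralu_succ_zero (r n : ℕ) :
    centralu r (n+1) 0 = -((n : ℤ)^2 + r) * centralu r n 0 := by
  cases n with
  | zero => show (-1)^1 * ∏ i ∈ Finset.range 1, ((i : ℤ)^2 + r) = _
            simp [centralu]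
  | succ m =>
    show (-1)^(m+2) * ∏ i ∈ Finset.range (m+2), ((i : ℤ)^2 + r)
      = -(((m+1 : ℕ) : ℤ)^2 + r) * ((-1)^(m+1) * ∏ i ∈ Finset.range (m+1), ((i : ℤ)^2 + r))
    rw [Finset.prod_range_succ]
    push_cast
    ring

/-- Shift of summation index for Icc sums. -/
lemma sum_Icc_shift (f : ℕ → ℤ) (a b : ℕ) :
    ∑ i ∈ Finset.Icc (a+1) (b+1), f i = ∑ j ∈ Finset.Icc a b, f (j+1) := by
  rw [← Finset.map_add_right_Icc a b 1, Finset.sum_map]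
  rfl

/-- The right-hand side sum. -/
def Ssum (r n k : ℕ) : ℤ :=
  ∑ i ∈ Finset.Icc k n, (i.choose k : ℤ) * (-(r : ℤ)) ^ (i - k) * centralu 0 n i

lemma Ssum_drop (r n k : ℕ) :
    ∑ i ∈ Finset.Icc k n, (i.choose (k+1) : ℤ) * (-(r : ℤ)) ^ (i - (k+1)) * centralu 0 n i
      = Ssum r n (k+1) := by
  rw [Ssum]
  refine (Finset.sum_subset ?_ ?_).symm
  · intro x hx; simp only [Finset.mem_Icc] at *; omega
  · intro x hx hx2
    simp only [Finset.mem_Icc] at hx hx2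
    have : x = k := by omega
    subst this
    simp [Nat.choose_succ_self]

lemma Ssum_rec (r n k : ℕ) :
    Ssum r (n+1) (k+1) = Ssum r n k - ((n : ℤ)^2 + r) * Ssum r n (k+1) := by
  have key : ∀ j ∈ Finset.Icc k n,
      (((j+1).choose (k+1) : ℤ) * (-(r : ℤ)) ^ (j + 1 - (k+1)) * centralu 0 (n+1) (j+1))
        = ((j.choose k : ℤ) * (-(r : ℤ)) ^ (j - k) * centralu 0 n j)
          + (-(r : ℤ)) * ((j.choose (k+1) : ℤ) * (-(r : ℤ)) ^ (j - (k+1)) * centralu 0 n j)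
          + (-(n : ℤ)^2) * (((j+1).choose (k+1) : ℤ) * (-(r : ℤ)) ^ (j + 1 - (k+1)) * centralu 0 n (j+1)) := by
    intro j hj
    simp only [Finset.mem_Icc] at hj
    have hcent : centralu 0 (n+1) (j+1) = centralu 0 n j - (n : ℤ)^2 * centralu 0 n (j+1) := by
      show centralu 0 n j - ((n : ℤ)^2 + ((0:ℕ) : ℤ)) * centralu 0 n (j+1) = _
      push_cast; ring
    have hpascal : (((j+1).choose (k+1) : ℤ)) = (j.choose k : ℤ) + (j.choose (k+1) : ℤ) := by
      rw [Nat.choose_succ_succ']; push_cast; ring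
    rw [Nat.succ_sub_succ, hcent, hpascal]
    rcases eq_or_lt_of_le hj.1 with h | h
    · subst h
      simp only [Nat.choose_succ_self, Nat.cast_zero, zero_mul, mul_zero, add_zero]
      ring
    · have h1 : j - k = (j - (k+1)) + 1 := by omega
      rw [h1, pow_succ]
      ring
  rw [Ssum, sum_Icc_shift, Finset.sum_congr rfl key, Finset.sum_add_distrib,
    Finset.sum_add_distrib, ← Finset.mul_sum, ← Finset.mul_sum, Ssum_drop]
  have h3 : ∑ j ∈ Finset.Icc k n,
      (((j+1).choose (k+1) : ℤ) * (-(r : ℤ)) ^ (j + 1 - (k+1)) * centralu 0 n (j+1))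
      = Ssum r n (k+1) := by
    rw [← sum_Icc_shift (fun i => ((i).choose (k+1) : ℤ) * (-(r : ℤ)) ^ (i - (k+1)) * centralu 0 n i), Ssum]
    refine (Finset.sum_subset ?_ ?_).symm
    · intro x hx; simp only [Finset.mem_Icc] at *; omega
    · intro x hx hx2
      simp only [Finset.mem_Icc] at hx hx2
      have : x = n + 1 := by omega
      subst this
      rw [centralu_zero_of_lt 0 n (n+1) (by omega)]
      ring
  have hA : (∑ j ∈ Finset.Icc k n, ((j.choose k : ℤ) * (-(r : ℤ)) ^ (j - k) * centralu 0 n j)) = Ssum r n k := rfl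
  rw [h3, hA]
  ring

lemma Icc_zero_insert (n : ℕ) : Finset.Icc 0 n = insert 0 (Finset.Icc 1 n) := by
  ext x; simp [Finset.mem_Icc]; omega

lemma Ssum_zero_rec (r n : ℕ) :
    Ssum r (n+1) 0 = -((n : ℤ)^2 + r) * Ssum r n 0 := by
  have key : ∀ j ∈ Finset.Icc 0 n,
      (((j+1).choose 0 : ℤ) * (-(r : ℤ)) ^ (j + 1 - 0) * centralu 0 (n+1) (j+1))
        = (-(r : ℤ)) * ((j.choose 0 : ℤ) * (-(r : ℤ)) ^ (j - 0) * centralu 0 n j)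
          + (-(n : ℤ)^2) * (((j+1).choose 0 : ℤ) * (-(r : ℤ)) ^ (j + 1 - 0) * centralu 0 n (j+1)) := by
    intro j hj
    have hcent : centralu 0 (n+1) (j+1) = centralu 0 n j - (n : ℤ)^2 * centralu 0 n (j+1) := by
      show centralu 0 n j - ((n : ℤ)^2 + ((0:ℕ) : ℤ)) * centralu 0 n (j+1) = _
      push_cast; ring
    rw [hcent]
    simp only [Nat.choose_zero_right, Nat.sub_zero, Nat.cast_one, pow_succ]
    ring
  have hsplit : Ssum r (n+1) 0 = centralu 0 (n+1) 0
      + ∑ i ∈ Finset.Icc 1 (n+1), ((i.choose 0 : ℤ) * (-(r : ℤ)) ^ (i - 0) * centralu 0 (n+1) i) := by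
    rw [Ssum, Icc_zero_insert, Finset.sum_insert (by simp)]
    simp
  have hshift : ∑ i ∈ Finset.Icc 1 (n+1), ((i.choose 0 : ℤ) * (-(r : ℤ)) ^ (i - 0) * centralu 0 (n+1) i)
      = ∑ j ∈ Finset.Icc 0 n, (((j+1).choose 0 : ℤ) * (-(r : ℤ)) ^ (j + 1 - 0) * centralu 0 (n+1) (j+1)) :=
    sum_Icc_shift _ 0 n
  have h2 : ∑ j ∈ Finset.Icc 0 n, (((j+1).choose 0 : ℤ) * (-(r : ℤ)) ^ (j + 1 - 0) * centralu 0 n (j+1))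
      = Ssum r n 0 - centralu 0 n 0 := by
    rw [← sum_Icc_shift (fun i => ((i).choose 0 : ℤ) * (-(r : ℤ)) ^ (i - 0) * centralu 0 n i) 0 n]
    have : ∑ i ∈ Finset.Icc 1 (n+1), ((i.choose 0 : ℤ) * (-(r : ℤ)) ^ (i - 0) * centralu 0 n i)
        = ∑ i ∈ Finset.Icc 1 n, ((i.choose 0 : ℤ) * (-(r : ℤ)) ^ (i - 0) * centralu 0 n i) := by
      refine (Finset.sum_subset ?_ ?_).symm
      · intro x hx; simp only [Finset.mem_Icc] at *; omega
      · intro x hx hx2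
        simp only [Finset.mem_Icc] at hx hx2
        have : x = n + 1 := by omega
        subst this
        rw [centralu_zero_of_lt 0 n (n+1) (by omega)]
        ring
    rw [this, Ssum, Icc_zero_insert, Finset.sum_insert (by simp)]
    simp
  have hc0 : centralu 0 (n+1) 0 = -(n : ℤ)^2 * centralu 0 n 0 := by
    have := centralu_succ_zero 0 n
    push_cast at this ⊢
    linarith [this]
  rw [hsplit, hshift, Finset.sum_congr rfl key, Finset.sum_add_distrib,
    ← Finset.mul_sum, ← Finset.mul_sum, h2, hc0]
  have hA : (∑ j ∈ Finset.Icc 0 n, ((j.choose 0 : ℤ) * (-(r : ℤ)) ^ (j - 0) * centralu 0 n j)) = Ssum r n 0 := rfl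
  rw [hA]
  ring

lemma centralu_eq_Ssum (r : ℕ) : ∀ n k : ℕ, centralu r n k = Ssum r n k := by
  intro n
  induction n with
  | zero =>
    intro k
    match k with
    | 0 => simp [Ssum, centralu]
    | k + 1 =>
      show (0 : ℤ) = _
      rw [Ssum, Finset.Icc_eq_empty (by omega), Finset.sum_empty]
  | succ n ih =>
    intro k
    match k with
    | 0 => rw [centralu_succ_zero, Ssum_zero_rec, ih 0]
    | k + 1 =>
      show centralu r n k - ((n : ℤ)^2 + r) * centralu r n (k+1) = _
      rw [ih k, ih (k+1), Ssum_rec]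

theorem centralu_eq_sum_centralu_zero (r n k : ℕ) (h : k ≤ n) :
    centralu r n k =
      ∑ i ∈ Finset.Icc k n, (i.choose k : ℤ) * (-(r : ℤ)) ^ (i - k) * centralu 0 n i := by
  exact centralu_eq_Ssum r n k
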